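/- Every vector of the form h_{kl} + Σ_{i=1}^d c_i a_{ii} with c_i ∈ ℤ_{≥0} is a hole of the CDEM semigroup: it lies in Q_sat but is not a nonnegative integer combination of the columns a_{ij}. -/

import Mathlib

open Finset

/-- The column `a_{ij}` of the CDEM matrix: 1 in coordinate `j`, 1 in coordinate
`d + i`, 1 in coordinate `2d` (the last one) iff `i = j`, and 0 elsewhere
(coordinates are 0-based). -/
def acol (d : ℕ) (i j : Fin d) : Fin (2 * d + 1) → ℤ := fun t =>
  (if (t : ℕ) = (j : ℕ) then 1 else 0) +
  (if (t : ℕ) = d + (i : ℕ) then 1 else 0) +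
  (if (t : ℕ) = 2 * d ∧ i = j then 1 else 0)

/-- The vector `h_{kl} = (a_{ll} + a_{lk} + a_{kl} + a_{kk}) / 2`. -/
def hvec (d : ℕ) (k l : Fin d) : Fin (2 * d + 1) → ℤ := fun t =>
  (acol d l l t + acol d l k t + acol d k l t + acol d k k t) / 2

/-- The CDEM semigroup: nonnegative integer combinations of the columns. -/
def cdemQ (d : ℕ) : Set (Fin (2 * d + 1) → ℤ) :=
  {b | ∃ x : Fin d → Fin d → ℕ, b = fun t => ∑ i, ∑ j, (x i j : ℤ) * acol d i j t}

/-- The real cone `K(A)` generated by the CDEM columns. -/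
def cdemCone (d : ℕ) (v : Fin (2 * d + 1) → ℝ) : Prop :=
  ∃ x : Fin d → Fin d → ℝ, (∀ i j, 0 ≤ x i j) ∧
    v = fun t => ∑ i, ∑ j, x i j * (acol d i j t : ℝ)

/-- The saturation `Q_sat = K(A) ∩ ℤ^{2d+1}` of the CDEM semigroup. -/
def cdemQsat (d : ℕ) : Set (Fin (2 * d + 1) → ℤ) :=
  {b | cdemCone d fun t => (b t : ℝ)}

/-- The `i`-th coordinate (0-based, `i < d`) as an index into `Fin (2d+1)`. -/
def idx1 (d : ℕ) (i : Fin d) : Fin (2 * d + 1) := ⟨(i : ℕ), by have := i.isLt; omega⟩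

/-- The `(d+i)`-th coordinate as an index into `Fin (2d+1)`. -/
def idx2 (d : ℕ) (i : Fin d) : Fin (2 * d + 1) := ⟨d + (i : ℕ), by have := i.isLt; omega⟩

lemma acol_idx1 (d : ℕ) (i j j' : Fin d) :
    acol d i j (idx1 d j') = if j' = j then 1 else 0 := by
  have h1 := j'.isLt
  have h2 := i.isLt
  unfold acol idx1
  rw [if_neg (show ¬((j' : ℕ) = d + (i : ℕ)) by omega),
    if_neg (show ¬((j' : ℕ) = 2 * d ∧ i = j) by rintro ⟨h, -⟩; omega)]
  simp [Fin.val_inj]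

lemma acol_idx2 (d : ℕ) (i j i' : Fin d) :
    acol d i j (idx2 d i') = if i' = i then 1 else 0 := by
  have h1 := i'.isLt
  have h2 := j.isLt
  have h3 := i.isLt
  unfold acol idx2
  rw [if_neg (show ¬(d + (i' : ℕ) = (j : ℕ)) by omega),
    if_neg (show ¬(d + (i' : ℕ) = 2 * d ∧ i = j) by rintro ⟨h, -⟩; omega)]
  simp [Fin.val_inj]

lemma acol_last (d : ℕ) (h : 2 * d < 2 * d + 1) (i j : Fin d) :
    acol d i j ⟨2 * d, h⟩ = if i = j then 1 else 0 := by
  have h1 := i.isLt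
  have h2 := j.isLt
  simp only [acol]
  rw [if_neg (show ¬(2 * d = (j : ℕ)) by omega),
    if_neg (show ¬(2 * d = d + (i : ℕ)) by omega)]
  simp

lemma hvec_apply (d : ℕ) (k l : Fin d) (hkl : k ≠ l) (t : Fin (2 * d + 1)) :
    hvec d k l t =
      (if (t : ℕ) = (k : ℕ) then 1 else 0) + (if (t : ℕ) = (l : ℕ) then 1 else 0) +
      (if (t : ℕ) = d + (k : ℕ) then 1 else 0) + (if (t : ℕ) = d + (l : ℕ) then 1 else 0) +
      (if (t : ℕ) = 2 * d then 1 else 0) := by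
  have h1 := k.isLt
  have h2 := l.isLt
  have h3 : (k : ℕ) ≠ (l : ℕ) := fun h => hkl (Fin.val_inj.mp h)
  simp only [hvec, acol, hkl, hkl.symm, and_true, and_false, if_false, if_true, eq_self_iff_true]
  split_ifs <;> omega

/-- Every vector of the form `h_{kl} + Σ_{i=1}^d c_i a_{ii}` with nonnegative integer
`c_i` is a hole of the CDEM semigroup: it lies in `Q_sat` but is not a nonnegative
integer combination of the columns `a_{ij}`. -/
theorem hvec_monoid_two_holes (d : ℕ) (hd : 2 ≤ d) (k l : Fin d) (hkl : k < l)
    (c : Fin d → ℕ) :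
    (fun t => hvec d k l t + ∑ i, (c i : ℤ) * acol d i i t) ∈ cdemQsat d ∧
    (fun t => hvec d k l t + ∑ i, (c i : ℤ) * acol d i i t) ∉ cdemQ d := by
  constructor
  · have hkl' : k ≠ l := Fin.ne_of_lt hkl
    refine ⟨fun i j =>
        (if j = k ∧ i = k then (1:ℝ)/2 else 0) + (if j = l ∧ i = k then (1:ℝ)/2 else 0) +
        (if j = k ∧ i = l then (1:ℝ)/2 else 0) + (if j = l ∧ i = l then (1:ℝ)/2 else 0) +
        (if i = j then (c i : ℝ) else 0), fun i j => by positivity, ?_⟩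
    funext t
    have h1 := k.isLt
    have h2 := l.isLt
    have h3 : (k : ℕ) ≠ (l : ℕ) := fun h => hkl' (Fin.val_inj.mp h)
    simp only [hvec_apply d k l hkl' t]
    push_cast [apply_ite (fun z : ℤ => (z : ℝ))]
    simp only [add_mul, ite_mul, zero_mul, Finset.sum_add_distrib, ite_and,
      Finset.sum_ite_eq, Finset.sum_ite_eq', Finset.mem_univ, if_true]
    simp only [acol, hkl', hkl'.symm, and_true, and_false, if_false, eq_self_iff_true]
    push_cast [apply_ite (fun z : ℤ => (z : ℝ))]
    split_ifs <;> first | omega | norm_num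
  · have hkl' : k ≠ l := Fin.ne_of_lt hkl
    have h1 := k.isLt
    have h2 := l.isLt
    rintro ⟨x, hx⟩
    -- column sums
    have E1 : ∀ j : Fin d, (∑ i, (x i j : ℤ)) =
        (if j = k then 1 else 0) + (if j = l then 1 else 0) + (c j : ℤ) := by
      intro j
      have hj := j.isLt
      have h := congrFun hx (idx1 d j)
      rw [hvec_apply d k l hkl'] at h
      simp only [acol_idx1, mul_ite, mul_one, mul_zero, Finset.sum_ite_eq,
        Finset.mem_univ, if_true] at h
      unfold idx1 at h
      rw [if_neg (show ¬((j : ℕ) = d + (k : ℕ)) by omega),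
        if_neg (show ¬((j : ℕ) = d + (l : ℕ)) by omega),
        if_neg (show ¬((j : ℕ) = 2 * d) by omega)] at h
      simp only [Fin.val_inj, add_zero] at h
      linarith [h]
    -- row sums
    have E2 : ∀ i : Fin d, (∑ j, (x i j : ℤ)) =
        (if i = k then 1 else 0) + (if i = l then 1 else 0) + (c i : ℤ) := by
      intro i
      have hi := i.isLt
      have h := congrFun hx (idx2 d i)
      rw [hvec_apply d k l hkl', Finset.sum_comm] at h
      simp only [acol_idx2, mul_ite, mul_one, mul_zero, Finset.sum_ite_eq,
        Finset.mem_univ, if_true] at h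
      unfold idx2 at h
      rw [if_neg (show ¬(d + (i : ℕ) = (k : ℕ)) by omega),
        if_neg (show ¬(d + (i : ℕ) = (l : ℕ)) by omega),
        if_neg (show ¬(d + (i : ℕ) = 2 * d) by omega)] at h
      simp only [Fin.val_inj, Nat.add_right_inj, zero_add, add_zero] at h
      linarith [h]
    -- trace
    have E3 : (∑ i, (x i i : ℤ)) = 1 + ∑ i, (c i : ℤ) := by
      have h := congrFun hx ⟨2 * d, by omega⟩
      rw [hvec_apply d k l hkl'] at h
      simp only [acol_last, mul_ite, mul_one, mul_zero, Finset.sum_ite_eq,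
        Finset.mem_univ, if_true] at h
      rw [if_neg (show ¬((2 * d) = (k : ℕ)) by omega),
        if_neg (show ¬((2 * d) = (l : ℕ)) by omega),
        if_neg (show ¬((2 * d) = d + (k : ℕ)) by omega),
        if_neg (show ¬((2 * d) = d + (l : ℕ)) by omega)] at h
      simp only [if_pos rfl, zero_add, add_zero] at h
      linarith [h]
    set R : Fin d → ℤ := fun i => ∑ j ∈ Finset.univ.erase i, (x i j : ℤ) with hR
    set S : Fin d → ℤ := fun i => ∑ j ∈ Finset.univ.erase i, (x j i : ℤ) with hS
    have hrow : ∀ i, R i + (x i i : ℤ) = ∑ j, (x i j : ℤ) := fun i =>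
      Finset.sum_erase_add _ _ (Finset.mem_univ i)
    have hcol : ∀ i, S i + (x i i : ℤ) = ∑ j, (x j i : ℤ) := fun i =>
      Finset.sum_erase_add _ _ (Finset.mem_univ i)
    have hRS : ∀ i, R i = S i := by
      intro i
      have := (hrow i).trans ((E2 i).trans (E1 i).symm)
      have := (hcol i)
      linarith
    have hRnn : ∀ i, 0 ≤ R i := fun i => Finset.sum_nonneg fun j _ => by positivity
    have hsumR : ∑ i, R i = 1 := by
      have htot : ∑ i, ∑ j, (x i j : ℤ) = 2 + ∑ i, (c i : ℤ) := by
        simp only [E2]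
        rw [Finset.sum_add_distrib, Finset.sum_add_distrib]
        simp [Finset.sum_ite_eq', hkl']
      have : ∑ i, (R i + (x i i : ℤ)) = ∑ i, ∑ j, (x i j : ℤ) := by
        exact Finset.sum_congr rfl fun i _ => hrow i
      rw [Finset.sum_add_distrib, E3, htot] at this
      linarith
    obtain ⟨p, -, hp⟩ := Finset.exists_ne_zero_of_sum_ne_zero (by rw [hsumR]; norm_num :
      ∑ i, R i ≠ 0)
    have hp1 : 1 ≤ R p := lt_of_le_of_ne (hRnn p) (Ne.symm hp)
    have hSp : S p ≠ 0 := by rw [← hRS]; exact hp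
    obtain ⟨q, hqmem, hq⟩ := Finset.exists_ne_zero_of_sum_ne_zero hSp
    have hqp : q ≠ p := Finset.ne_of_mem_erase hqmem
    have hq1 : 1 ≤ (x q p : ℤ) := by
      exact_mod_cast Nat.one_le_iff_ne_zero.mpr (by exact_mod_cast hq)
    have hRq : 1 ≤ R q :=
      le_trans hq1 (Finset.single_le_sum (f := fun j => (x q j : ℤ))
        (fun j _ => by positivity)
        (Finset.mem_erase.mpr ⟨Ne.symm hqp, Finset.mem_univ p⟩))
    have hle : R p + R q ≤ ∑ i, R i := by
      rw [← Finset.sum_pair (show p ≠ q from Ne.symm hqp)]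
      exact Finset.sum_le_sum_of_subset_of_nonneg (Finset.subset_univ _)
        (fun i _ _ => hRnn i)
    rw [hsumR] at hle
    linarith
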